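/- Let Λ = ⊕_{g∈G} Λ_g be a ring strongly graded by a group G (i.e. Λ_g Λ_h = Λ_{gh} for all g,h), with identity component Δ = Λ_1. Then for every g, h ∈ G, if Λ_h ≅ Λ_1 as Δ-bimodules, then Λ_{g⁻¹hg} ≅ Λ_1 as Δ-bimodules. -/

import Mathlib

open Pointwise
/-- A strong grading of the ring `Λ` by the group `G`: `Λ` is the internal direct
sum of the additive subgroups `A g`, and `A g * A h = A (g * h)` for all `g, h`. -/
structure IsStrongGrading {G Λ : Type*} [Group G] [Ring Λ] [DecidableEq G]
    (A : G → AddSubgroup Λ) : Prop where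
  internal : DirectSum.IsInternal A
  one_mem : (1 : Λ) ∈ A 1
  mul_mem : ∀ (g h : G), ∀ a ∈ A g, ∀ b ∈ A h, a * b ∈ A (g * h)
  strong : ∀ g h : G, A (g * h) ≤ AddSubgroup.closure ((A g : Set Λ) * (A h : Set Λ))

/-- `Λ_g ≅ Λ_h` as `Δ`-bimodules (`Δ = Λ_1`): an additive equivalence compatible
with left and right multiplication by elements of the identity component. -/
def ComponentBimodIso {G Λ : Type*} [Group G] [Ring Λ]
    (A : G → AddSubgroup Λ) (g h : G) : Prop :=
  ∃ f : A g ≃+ A h,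
    (∀ d ∈ A (1 : G), ∀ x y : A g, (y : Λ) = d * (x : Λ) → ((f y : Λ) = d * (f x : Λ))) ∧
    (∀ d ∈ A (1 : G), ∀ x y : A g, (y : Λ) = (x : Λ) * d → ((f y : Λ) = (f x : Λ) * d))

private lemma exists_fin_sum {Λ : Type*} [Ring Λ] (S T : AddSubgroup Λ) {x : Λ}
    (hx : x ∈ AddSubgroup.closure ((S : Set Λ) * (T : Set Λ))) :
    ∃ (n : ℕ) (a b : Fin n → Λ), (∀ i, a i ∈ S) ∧ (∀ i, b i ∈ T) ∧ ∑ i, a i * b i = x := by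
  induction hx using AddSubgroup.closure_induction with
  | mem z hz =>
    obtain ⟨s, hs, t, ht, rfl⟩ := hz
    exact ⟨1, fun _ => s, fun _ => t, fun _ => hs, fun _ => ht, by simp⟩
  | zero => exact ⟨0, ![], ![], by simp, by simp, by simp⟩
  | add z w hz hw ihz ihw =>
    obtain ⟨n, a, b, ha, hb, hab⟩ := ihz
    obtain ⟨m, c, d, hc, hd, hcd⟩ := ihw
    refine ⟨n + m, Fin.addCases a c, Fin.addCases b d, ?_, ?_, ?_⟩
    · intro i
      induction i using Fin.addCases with
      | left i => simpa using ha i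
      | right i => simpa using hc i
    · intro i
      induction i using Fin.addCases with
      | left i => simpa using hb i
      | right i => simpa using hd i
    · rw [Fin.sum_univ_add]
      simp only [Fin.addCases_left, Fin.addCases_right]
      rw [hab, hcd]
  | neg z hz ihz =>
    obtain ⟨n, a, b, ha, hb, hab⟩ := ihz
    exact ⟨n, fun i => -a i, b, fun i => neg_mem (ha i), hb, by
      simp only [neg_mul]
      rw [Finset.sum_neg_distrib, hab]⟩


private lemma conj_aux {G Λ : Type*} [Group G] [Ring Λ] [DecidableEq G]
    (A : G → AddSubgroup Λ) (hA : IsStrongGrading A) (g h : G)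
    (f : A h ≃+ A 1)
    (hfl : ∀ d ∈ A (1 : G), ∀ x y : A h, (y : Λ) = d * (x : Λ) → ((f y : Λ) = d * (f x : Λ)))
    (hfr : ∀ d ∈ A (1 : G), ∀ x y : A h, (y : Λ) = (x : Λ) * d → ((f y : Λ) = (f x : Λ) * d)) :
    ∃ F : A (g⁻¹ * h * g) ≃+ A 1,
      (∀ d ∈ A (1 : G), ∀ x y : A (g⁻¹ * h * g),
        (y : Λ) = d * (x : Λ) → ((F y : Λ) = d * (F x : Λ))) ∧
      (∀ d ∈ A (1 : G), ∀ x y : A (g⁻¹ * h * g),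
        (y : Λ) = (x : Λ) * d → ((F y : Λ) = (F x : Λ) * d)) := by
  classical
  -- partition of unity
  have h1 : (1 : Λ) ∈ A (g⁻¹ * g) := by rw [inv_mul_cancel]; exact hA.one_mem
  obtain ⟨n, a, b, ha, hb, hab⟩ := exists_fin_sum (A g⁻¹) (A g) (hA.strong g⁻¹ g h1)
  have hmul : ∀ {p q : G} (x : Λ), x ∈ A p → ∀ (y : Λ), y ∈ A q → x * y ∈ A (p * q) :=
    fun x hx y hy => hA.mul_mem _ _ x hx y hy
  -- memberships
  have memH : ∀ (k i : Fin n) (x : A (g⁻¹ * h * g)), b k * (x : Λ) * a i ∈ A h := by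
    intro k i x
    have : b k * (x : Λ) * a i ∈ A (g * (g⁻¹ * h * g) * g⁻¹) :=
      hmul _ (hmul _ (hb k) _ x.2) _ (ha i)
    have e : g * (g⁻¹ * h * g) * g⁻¹ = h := by group
    rwa [e] at this
  have mem1 : ∀ (k i : Fin n) (d : A (1 : G)), b k * (d : Λ) * a i ∈ A (1 : G) := by
    intro k i d
    have : b k * (d : Λ) * a i ∈ A (g * 1 * g⁻¹) := hmul _ (hmul _ (hb k) _ d.2) _ (ha i)
    have e : g * 1 * g⁻¹ = (1 : G) := by group
    rwa [e] at this
  have memKI : ∀ (k i : Fin n) (c : Λ), c ∈ A (1 : G) → a k * c * b i ∈ A (1 : G) := by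
    intro k i c hc
    have : a k * c * b i ∈ A (g⁻¹ * 1 * g) := hmul _ (hmul _ (ha k) _ hc) _ (hb i)
    have e : g⁻¹ * 1 * g = (1 : G) := by group
    rwa [e] at this
  have memC : ∀ (k i : Fin n) (c : Λ), c ∈ A h → a k * c * b i ∈ A (g⁻¹ * h * g) := by
    intro k i c hc
    exact hmul _ (hmul _ (ha k) _ hc) _ (hb i)
  have memba : ∀ (k i : Fin n), b k * a i ∈ A (1 : G) := by
    intro k i
    have : b k * a i ∈ A (g * g⁻¹) := hmul _ (hb k) _ (ha i)
    rwa [mul_inv_cancel] at this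
  -- two-sided compatibility of f and f.symm
  have hf2 : ∀ d₁ ∈ A (1 : G), ∀ d₂ ∈ A (1 : G), ∀ (z w : A h),
      (w : Λ) = d₁ * (z : Λ) * d₂ → (f w : Λ) = d₁ * (f z : Λ) * d₂ := by
    intro d₁ hd₁ d₂ hd₂ z w hw
    have hz' : (z : Λ) * d₂ ∈ A h := by
      have : (z : Λ) * d₂ ∈ A (h * 1) := hmul _ z.2 _ hd₂
      rwa [mul_one] at this
    have e1 : (f ⟨(z : Λ) * d₂, hz'⟩ : Λ) = (f z : Λ) * d₂ := hfr d₂ hd₂ z _ rfl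
    have e2 : (f w : Λ) = d₁ * (f ⟨(z : Λ) * d₂, hz'⟩ : Λ) :=
      hfl d₁ hd₁ _ w (by rw [hw, mul_assoc])
    rw [e2, e1, mul_assoc]
  have hs2 : ∀ d₁ ∈ A (1 : G), ∀ d₂ ∈ A (1 : G), ∀ (z : A (1 : G)) (w : A (1 : G)),
      (w : Λ) = d₁ * (z : Λ) * d₂ → (f.symm w : Λ) = d₁ * (f.symm z : Λ) * d₂ := by
    intro d₁ hd₁ d₂ hd₂ z w hw
    have hmem : d₁ * (f.symm z : Λ) * d₂ ∈ A h := by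
      have m1 : d₁ * (f.symm z : Λ) ∈ A (1 * h) := hmul _ hd₁ _ (f.symm z).2
      have : d₁ * (f.symm z : Λ) * d₂ ∈ A (1 * h * 1) := hmul _ m1 _ hd₂
      rwa [one_mul, mul_one] at this
    have key : f ⟨d₁ * (f.symm z : Λ) * d₂, hmem⟩ = w := by
      apply Subtype.ext
      have := hf2 d₁ hd₁ d₂ hd₂ (f.symm z) ⟨d₁ * (f.symm z : Λ) * d₂, hmem⟩ rfl
      rw [this, AddEquiv.apply_symm_apply, hw]
    have := congrArg f.symm key
    rw [AddEquiv.symm_apply_apply] at this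
    rw [← this]
  -- the maps
  set eH : A (g⁻¹ * h * g) → Fin n → Fin n → A h :=
    fun x k i => ⟨b k * (x : Λ) * a i, memH k i x⟩ with heH
  set e1 : A (1 : G) → Fin n → Fin n → A (1 : G) :=
    fun d k i => ⟨b k * (d : Λ) * a i, mem1 k i d⟩ with he1
  set Φ : A (g⁻¹ * h * g) → A (1 : G) :=
    fun x => ⟨∑ k, ∑ i, a k * (f (eH x k i) : Λ) * b i,
      sum_mem fun k _ => sum_mem fun i _ => memKI k i _ (f (eH x k i)).2⟩ with hΦ
  set Ψ : A (1 : G) → A (g⁻¹ * h * g) :=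
    fun d => ⟨∑ k, ∑ i, a k * (f.symm (e1 d k i) : Λ) * b i,
      sum_mem fun k _ => sum_mem fun i _ => memC k i _ (f.symm (e1 d k i)).2⟩ with hΨ
  -- sum collapsing helpers
  have hL : ∀ c : Λ, ∑ k, a k * (b k * c) = c := by
    intro c
    simp only [← mul_assoc]
    rw [← Finset.sum_mul, hab, one_mul]
  have collapse : ∀ Y : Fin n → Fin n → Λ,
      (∑ k, ∑ i, a k * (∑ k', ∑ i', b k * a k' * (Y k' i' * (b i' * a i))) * b i)
        = ∑ k, ∑ i, a k * Y k i * b i := by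
    intro Y
    simp only [Finset.mul_sum, Finset.sum_mul, mul_assoc]
    calc (∑ k, ∑ i, ∑ k', ∑ i',
            a k * (b k * (a k' * (Y k' i' * (b i' * (a i * b i))))))
        = ∑ k, ∑ k', ∑ i', ∑ i,
            a k * (b k * (a k' * (Y k' i' * (b i' * (a i * b i))))) := by
          refine Finset.sum_congr rfl fun k _ => ?_
          rw [Finset.sum_comm]
          exact Finset.sum_congr rfl fun k' _ => Finset.sum_comm
      _ = ∑ k, ∑ i, a k * (Y k i * b i) := by
          simp only [← Finset.mul_sum]
          rw [hab]
          simp only [mul_one]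
          rw [hL]
  have sandwich : ∀ c : Λ, ∑ k, ∑ i, a k * (b k * c * a i) * b i = c := by
    intro c
    simp only [mul_assoc, ← Finset.mul_sum]
    rw [hab]
    simp only [mul_one]
    rw [hL]
  -- expansions
  have expand1 : ∀ (x : A (g⁻¹ * h * g)) (k i : Fin n),
      (f.symm (e1 (Φ x) k i) : Λ)
        = ∑ k', ∑ i', b k * a k' * ((eH x k' i' : Λ) * (b i' * a i)) := by
    intro x k i
    have hmemw : ∀ k' i' : Fin n,
        b k * a k' * ((f (eH x k' i') : Λ) * (b i' * a i)) ∈ A (1 : G) := by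
      intro k' i'
      have h2 : (f (eH x k' i') : Λ) * (b i' * a i) ∈ A ((1 : G) * 1) :=
        hmul _ (f (eH x k' i')).2 _ (memba i' i)
      rw [one_mul] at h2
      have h3 := hmul _ (memba k k') _ h2
      rwa [one_mul] at h3
    have hsum : e1 (Φ x) k i
        = ∑ k', ∑ i', (⟨_, hmemw k' i'⟩ : A (1 : G)) := by
      apply Subtype.ext
      push_cast
      show b k * (∑ k', ∑ i', a k' * (f (eH x k' i') : Λ) * b i') * a i
          = ∑ k', ∑ i', b k * a k' * ((f (eH x k' i') : Λ) * (b i' * a i))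
      simp only [Finset.mul_sum, Finset.sum_mul, mul_assoc]
    rw [hsum, map_sum]
    push_cast
    refine Finset.sum_congr rfl fun k' _ => ?_
    rw [map_sum]
    push_cast
    refine Finset.sum_congr rfl fun i' _ => ?_
    have hterm := hs2 (b k * a k') (memba k k') (b i' * a i) (memba i' i)
      (f (eH x k' i')) ⟨_, hmemw k' i'⟩ ((mul_assoc _ _ _).symm)
    rw [hterm, AddEquiv.symm_apply_apply, mul_assoc]
  have expand2 : ∀ (d : A (1 : G)) (k i : Fin n),
      (f (eH (Ψ d) k i) : Λ)
        = ∑ k', ∑ i', b k * a k' * ((e1 d k' i' : Λ) * (b i' * a i)) := by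
    intro d k i
    have hmemw : ∀ k' i' : Fin n,
        b k * a k' * ((f.symm (e1 d k' i') : Λ) * (b i' * a i)) ∈ A h := by
      intro k' i'
      have h2 : (f.symm (e1 d k' i') : Λ) * (b i' * a i) ∈ A (h * 1) :=
        hmul _ (f.symm (e1 d k' i')).2 _ (memba i' i)
      rw [mul_one] at h2
      have h3 := hmul _ (memba k k') _ h2
      rwa [one_mul] at h3
    have hsum : eH (Ψ d) k i
        = ∑ k', ∑ i', (⟨_, hmemw k' i'⟩ : A h) := by
      apply Subtype.ext
      push_cast
      show b k * (∑ k', ∑ i', a k' * (f.symm (e1 d k' i') : Λ) * b i') * a i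
          = ∑ k', ∑ i', b k * a k' * ((f.symm (e1 d k' i') : Λ) * (b i' * a i))
      simp only [Finset.mul_sum, Finset.sum_mul, mul_assoc]
    rw [hsum, map_sum]
    push_cast
    refine Finset.sum_congr rfl fun k' _ => ?_
    rw [map_sum]
    push_cast
    refine Finset.sum_congr rfl fun i' _ => ?_
    have hterm := hf2 (b k * a k') (memba k k') (b i' * a i) (memba i' i)
      (f.symm (e1 d k' i')) ⟨_, hmemw k' i'⟩ ((mul_assoc _ _ _).symm)
    rw [hterm, AddEquiv.apply_symm_apply, mul_assoc]
  have leftinv : ∀ x, Ψ (Φ x) = x := by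
    intro x
    apply Subtype.ext
    show (∑ k, ∑ i, a k * (f.symm (e1 (Φ x) k i) : Λ) * b i) = (x : Λ)
    calc (∑ k, ∑ i, a k * (f.symm (e1 (Φ x) k i) : Λ) * b i)
        = ∑ k, ∑ i, a k * (∑ k', ∑ i', b k * a k' * ((eH x k' i' : Λ) * (b i' * a i))) * b i := by
          exact Finset.sum_congr rfl fun k _ => Finset.sum_congr rfl fun i _ => by
            rw [expand1]
      _ = ∑ k, ∑ i, a k * (eH x k i : Λ) * b i := collapse _
      _ = ∑ k, ∑ i, a k * (b k * (x : Λ) * a i) * b i := rfl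
      _ = (x : Λ) := sandwich _
  have rightinv : ∀ d, Φ (Ψ d) = d := by
    intro d
    apply Subtype.ext
    show (∑ k, ∑ i, a k * (f (eH (Ψ d) k i) : Λ) * b i) = (d : Λ)
    calc (∑ k, ∑ i, a k * (f (eH (Ψ d) k i) : Λ) * b i)
        = ∑ k, ∑ i, a k * (∑ k', ∑ i', b k * a k' * ((e1 d k' i' : Λ) * (b i' * a i))) * b i := by
          exact Finset.sum_congr rfl fun k _ => Finset.sum_congr rfl fun i _ => by
            rw [expand2]
      _ = ∑ k, ∑ i, a k * (e1 d k i : Λ) * b i := collapse _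
      _ = ∑ k, ∑ i, a k * (b k * (d : Λ) * a i) * b i := rfl
      _ = (d : Λ) := sandwich _
  have mapadd : ∀ x y, Φ (x + y) = Φ x + Φ y := by
    intro x y
    apply Subtype.ext
    have heHadd : ∀ k i, eH (x + y) k i = eH x k i + eH y k i := by
      intro k i
      apply Subtype.ext
      show b k * ((x : Λ) + (y : Λ)) * a i = b k * (x : Λ) * a i + b k * (y : Λ) * a i
      rw [mul_add, add_mul]
    show (∑ k, ∑ i, a k * (f (eH (x + y) k i) : Λ) * b i)
        = (∑ k, ∑ i, a k * (f (eH x k i) : Λ) * b i)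
          + ∑ k, ∑ i, a k * (f (eH y k i) : Λ) * b i
    rw [← Finset.sum_add_distrib]
    refine Finset.sum_congr rfl fun k _ => ?_
    rw [← Finset.sum_add_distrib]
    refine Finset.sum_congr rfl fun i _ => ?_
    rw [heHadd, map_add]
    push_cast
    rw [mul_add, add_mul]
  set F : A (g⁻¹ * h * g) ≃+ A (1 : G) :=
    { toFun := Φ, invFun := Ψ, left_inv := leftinv, right_inv := rightinv,
      map_add' := mapadd } with hF
  refine ⟨F, ?_, ?_⟩
  · -- left compatibility
    intro d hd x y hxy
    show (Φ y : Λ) = d * (Φ x : Λ)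
    have hbd : ∀ (k k' : Fin n), b k * d * a k' ∈ A (1 : G) := fun k k' => mem1 k k' ⟨d, hd⟩
    have expandL : ∀ k i : Fin n, (f (eH y k i) : Λ)
        = ∑ k', b k * d * a k' * (f (eH x k' i) : Λ) := by
      intro k i
      have hmemw : ∀ k' : Fin n, b k * d * a k' * (eH x k' i : Λ) ∈ A h := by
        intro k'
        have h2 := hmul _ (hbd k k') _ (eH x k' i).2
        rwa [one_mul] at h2
      have hsum : eH y k i = ∑ k', (⟨_, hmemw k'⟩ : A h) := by
        apply Subtype.ext
        push_cast
        show b k * (y : Λ) * a i = ∑ k', b k * d * a k' * (b k' * (x : Λ) * a i)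
        rw [hxy]
        simp only [mul_assoc, ← Finset.mul_sum]
        rw [hL]
      rw [hsum, map_sum]
      push_cast
      refine Finset.sum_congr rfl fun k' _ => ?_
      exact hfl _ (hbd k k') (eH x k' i) ⟨_, hmemw k'⟩ rfl
    show (∑ k, ∑ i, a k * (f (eH y k i) : Λ) * b i) = d * ∑ k, ∑ i, a k * (f (eH x k i) : Λ) * b i
    calc (∑ k, ∑ i, a k * (f (eH y k i) : Λ) * b i)
        = ∑ k, ∑ i, a k * (∑ k', b k * d * a k' * (f (eH x k' i) : Λ)) * b i := by
          exact Finset.sum_congr rfl fun k _ => Finset.sum_congr rfl fun i _ => by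
            rw [expandL]
      _ = ∑ i, ∑ k', ∑ k,
            a k * (b k * (d * (a k' * ((f (eH x k' i) : Λ) * b i)))) := by
          simp only [Finset.mul_sum, Finset.sum_mul, mul_assoc]
          rw [Finset.sum_comm]
          exact Finset.sum_congr rfl fun i _ => Finset.sum_comm
      _ = ∑ i, ∑ k', d * (a k' * ((f (eH x k' i) : Λ) * b i)) := by
          exact Finset.sum_congr rfl fun i _ => Finset.sum_congr rfl fun k' _ => hL _
      _ = d * ∑ k, ∑ i, a k * (f (eH x k i) : Λ) * b i := by
          simp only [← Finset.mul_sum, mul_assoc]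
          rw [Finset.sum_comm]
          simp only [Finset.mul_sum]
  · intro d hd x y hxy
    show (Φ y : Λ) = (Φ x : Λ) * d
    have hbd : ∀ (i' i : Fin n), b i' * d * a i ∈ A (1 : G) := fun i' i => mem1 i' i ⟨d, hd⟩
    have expandR : ∀ k i : Fin n, (f (eH y k i) : Λ)
        = ∑ i', (f (eH x k i') : Λ) * (b i' * d * a i) := by
      intro k i
      have hmemw : ∀ i' : Fin n, (eH x k i' : Λ) * (b i' * d * a i) ∈ A h := by
        intro i'
        have h2 := hmul _ (eH x k i').2 _ (hbd i' i)
        rwa [mul_one] at h2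
      have hsum : eH y k i = ∑ i', (⟨_, hmemw i'⟩ : A h) := by
        apply Subtype.ext
        push_cast
        show b k * (y : Λ) * a i = ∑ i', b k * (x : Λ) * a i' * (b i' * d * a i)
        rw [hxy]
        simp only [mul_assoc, ← Finset.mul_sum]
        rw [hL]
      rw [hsum, map_sum]
      push_cast
      refine Finset.sum_congr rfl fun i' _ => ?_
      exact hfr _ (hbd i' i) (eH x k i') ⟨_, hmemw i'⟩ rfl
    show (∑ k, ∑ i, a k * (f (eH y k i) : Λ) * b i)
        = (∑ k, ∑ i, a k * (f (eH x k i) : Λ) * b i) * d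
    calc (∑ k, ∑ i, a k * (f (eH y k i) : Λ) * b i)
        = ∑ k, ∑ i, a k * (∑ i', (f (eH x k i') : Λ) * (b i' * d * a i)) * b i := by
          exact Finset.sum_congr rfl fun k _ => Finset.sum_congr rfl fun i _ => by
            rw [expandR]
      _ = ∑ k, ∑ i', ∑ i,
            a k * ((f (eH x k i') : Λ) * (b i' * (d * (a i * b i)))) := by
          simp only [Finset.mul_sum, Finset.sum_mul, mul_assoc]
          exact Finset.sum_congr rfl fun k _ => Finset.sum_comm
      _ = ∑ k, ∑ i', a k * ((f (eH x k i') : Λ) * (b i' * d)) := by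
          simp only [← Finset.mul_sum]
          rw [hab]
          simp only [mul_one]
      _ = (∑ k, ∑ i, a k * (f (eH x k i) : Λ) * b i) * d := by
          simp only [Finset.sum_mul, mul_assoc]


/-- In a strongly `G`-graded ring, if `Λ_h ≅ Λ_1` as
`Δ`-bimodules then `Λ_{g⁻¹hg} ≅ Λ_1` as `Δ`-bimodules. -/
theorem conj_of_bimodIso {G Λ : Type*} [Group G] [Ring Λ] [DecidableEq G]
    (A : G → AddSubgroup Λ) (hA : IsStrongGrading A) (g h : G)
    (hh : ComponentBimodIso A h 1) :
    ComponentBimodIso A (g⁻¹ * h * g) 1 := by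
  obtain ⟨f, hfl, hfr⟩ := hh
  exact conj_aux A hA g h f hfl hfr
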